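/- Let K ⊂ ℝ² be a convex polygon with rB ⊂ K ⊂ RB. For every δ ∈ (0, 0.02(r/R)²] there exist vertices v₁,…,v_m of K (in anticlockwise order) such that, with Q = conv{v₁,…,v_m}: (i) Q ⊂ K ⊂ (1 + 4R²r^{−2}δ)·Q, and (ii) for each i (cyclically), the angle ∠v_i 0 v_{i+1} is at least δ. -/

import Mathlib

open Real Set
open scoped Pointwise

/-- Cross product of two planar vectors. -/
def cross (u v : ℝ × ℝ) : ℝ := u.1 * v.2 - u.2 * v.1

/-- The Euclidean norm on the plane `ℝ × ℝ`. -/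
noncomputable def eN (p : ℝ × ℝ) : ℝ := Real.sqrt (p.1 ^ 2 + p.2 ^ 2)

/-- The (unsigned) angle at the origin between the vectors `u` and `v`. -/
noncomputable def ang (u v : ℝ × ℝ) : ℝ :=
  Real.arccos ((u.1 * v.1 + u.2 * v.2) / (eN u * eN v))

/-- The closed Euclidean disk of radius `ρ` centred at the origin. -/
def eBall (ρ : ℝ) : Set (ℝ × ℝ) := {p | eN p ≤ ρ}

noncomputable section Aux

/-- dot product -/
def dotp (u v : ℝ × ℝ) : ℝ := u.1 * v.1 + u.2 * v.2

lemma eN_nonneg (p : ℝ × ℝ) : 0 ≤ eN p := Real.sqrt_nonneg _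

lemma eN_sq (p : ℝ × ℝ) : eN p ^ 2 = p.1 ^ 2 + p.2 ^ 2 :=
  Real.sq_sqrt (by positivity)

lemma eN_eq_zero {p : ℝ × ℝ} (h : eN p = 0) : p = 0 := by
  have h2 : p.1 ^ 2 + p.2 ^ 2 = 0 := by
    have := eN_sq p; rw [h] at this; linarith [this]
  have h1 : p.1 = 0 := by nlinarith [sq_nonneg p.1, sq_nonneg p.2]
  have h2' : p.2 = 0 := by nlinarith [sq_nonneg p.1, sq_nonneg p.2]
  exact Prod.ext h1 h2'

lemma eN_pos {p : ℝ × ℝ} (h : p ≠ 0) : 0 < eN p := by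
  rcases lt_or_eq_of_le (eN_nonneg p) with h' | h'
  · exact h'
  · exact absurd (eN_eq_zero h'.symm) h

lemma eN_smul (t : ℝ) (p : ℝ × ℝ) : eN (t • p) = |t| * eN p := by
  simp only [eN, Prod.smul_fst, Prod.smul_snd, smul_eq_mul]
  rw [show (t * p.1) ^ 2 + (t * p.2) ^ 2 = t ^ 2 * (p.1 ^ 2 + p.2 ^ 2) by ring,
    Real.sqrt_mul (sq_nonneg t), Real.sqrt_sq_eq_abs]

lemma lagrange (u v : ℝ × ℝ) : cross u v ^ 2 + dotp u v ^ 2 = (eN u * eN v) ^ 2 := by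
  have : (eN u * eN v) ^ 2 = (u.1 ^ 2 + u.2 ^ 2) * (v.1 ^ 2 + v.2 ^ 2) := by
    rw [mul_pow, eN_sq, eN_sq]
  rw [this]; simp only [cross, dotp]; ring

lemma abs_dotp_le (u v : ℝ × ℝ) : |dotp u v| ≤ eN u * eN v := by
  have h := lagrange u v
  have h1 : dotp u v ^ 2 ≤ (eN u * eN v) ^ 2 := by nlinarith [sq_nonneg (cross u v)]
  have h2 : 0 ≤ eN u * eN v := mul_nonneg (eN_nonneg u) (eN_nonneg v)
  exact abs_le_of_sq_le_sq h1 h2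

lemma abs_cross_le (u v : ℝ × ℝ) : |cross u v| ≤ eN u * eN v := by
  have h := lagrange u v
  have h1 : cross u v ^ 2 ≤ (eN u * eN v) ^ 2 := by nlinarith [sq_nonneg (dotp u v)]
  have h2 : 0 ≤ eN u * eN v := mul_nonneg (eN_nonneg u) (eN_nonneg v)
  exact abs_le_of_sq_le_sq h1 h2

lemma eN_add_le (u v : ℝ × ℝ) : eN (u + v) ≤ eN u + eN v := by
  have h1 : eN (u + v) ^ 2 = eN u ^ 2 + 2 * dotp u v + eN v ^ 2 := by
    rw [eN_sq, eN_sq, eN_sq]; simp only [dotp, Prod.fst_add, Prod.snd_add]; ring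
  have h2 : dotp u v ≤ eN u * eN v := (le_abs_self _).trans (abs_dotp_le u v)
  have h3 : eN (u + v) ^ 2 ≤ (eN u + eN v) ^ 2 := by nlinarith
  have := abs_le_of_sq_le_sq h3 (add_nonneg (eN_nonneg u) (eN_nonneg v))
  rwa [abs_of_nonneg (eN_nonneg _)] at this

/-- angle coordinate -/
def th (p : ℝ × ℝ) : ℝ := Complex.arg ⟨p.1, p.2⟩

lemma th_cos_sin (p : ℝ × ℝ) : p.1 = eN p * Real.cos (th p) ∧ p.2 = eN p * Real.sin (th p) := by
  have habs : ‖(⟨p.1, p.2⟩ : ℂ)‖ = eN p := by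
    rw [Complex.norm_def, Complex.normSq_apply, eN]; ring_nf
  constructor
  · have := Complex.norm_mul_cos_arg (⟨p.1, p.2⟩ : ℂ)
    rw [habs] at this; exact this.symm
  · have := Complex.norm_mul_sin_arg (⟨p.1, p.2⟩ : ℂ)
    rw [habs] at this; exact this.symm

lemma th_mem (p : ℝ × ℝ) : -π < th p ∧ th p ≤ π :=
  ⟨Complex.neg_pi_lt_arg _, Complex.arg_le_pi _⟩

lemma dotp_eq (u v : ℝ × ℝ) : dotp u v = eN u * eN v * Real.cos (th v - th u) := by
  obtain ⟨hu1, hu2⟩ := th_cos_sin u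
  obtain ⟨hv1, hv2⟩ := th_cos_sin v
  rw [Real.cos_sub, dotp, hu1, hu2, hv1, hv2]; ring

lemma cross_eq (u v : ℝ × ℝ) : cross u v = eN u * eN v * Real.sin (th v - th u) := by
  obtain ⟨hu1, hu2⟩ := th_cos_sin u
  obtain ⟨hv1, hv2⟩ := th_cos_sin v
  rw [Real.sin_sub, cross, hu1, hu2, hv1, hv2]; ring

end Aux
section LemB
variable {K : Set (ℝ × ℝ)} {r : ℝ}

lemma zero_mem (hr : 0 < r) (hrB : eBall r ⊆ K) : (0 : ℝ × ℝ) ∈ K := by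
  apply hrB
  show eN 0 ≤ r
  have : eN (0 : ℝ × ℝ) = 0 := by
    simp [eN]
  rw [this]; exact hr.le

lemma extreme_ne_zero (hr : 0 < r) (hrB : eBall r ⊆ K)
    {s : ℝ × ℝ} (hs : s ∈ K.extremePoints ℝ) : s ≠ 0 := by
  rintro rfl
  have h1 : ((r, 0) : ℝ × ℝ) ∈ K := by
    apply hrB; show eN (r, 0) ≤ r
    have : eN ((r, 0) : ℝ × ℝ) = Real.sqrt (r ^ 2) := by
      simp [eN]
    rw [this, Real.sqrt_sq hr.le]
  have h2 : ((-r, 0) : ℝ × ℝ) ∈ K := by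
    apply hrB; show eN (-r, 0) ≤ r
    have : eN ((-r, 0) : ℝ × ℝ) = Real.sqrt (r ^ 2) := by
      simp [eN]
    rw [this, Real.sqrt_sq hr.le]
  have hseg : (0 : ℝ × ℝ) ∈ openSegment ℝ ((r, 0) : ℝ × ℝ) ((-r, 0) : ℝ × ℝ) := by
    refine ⟨1/2, 1/2, by norm_num, by norm_num, by norm_num, ?_⟩
    ext
    · show (1:ℝ)/2 * r + 1/2 * (-r) = 0; ring
    · show (1:ℝ)/2 * 0 + 1/2 * 0 = 0; ring
  have := hs.2 h1 h2 hseg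
  have : (r : ℝ) = 0 := congrArg Prod.fst this
  exact absurd this hr.ne'

lemma lemB (hr : 0 < r) (hrB : eBall r ⊆ K)
    {s e : ℝ × ℝ} (hs : s ∈ K.extremePoints ℝ) (he : e ∈ K) (hne : e ≠ s)
    (hdot : eN s ^ 2 < dotp s e) : r * eN (e - s) ≤ |cross e s| := by
  by_contra hcon
  push_neg at hcon
  have hD : eN (e - s) ^ 2 = (e.1 - s.1) ^ 2 + (e.2 - s.2) ^ 2 := by
    rw [eN_sq]; rfl
  set D : ℝ := (e.1 - s.1) ^ 2 + (e.2 - s.2) ^ 2 with hDdef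
  set N : ℝ := e.1 * (e.1 - s.1) + e.2 * (e.2 - s.2) with hNdef
  have hens : (0:ℝ) < eN (e - s) := eN_pos (sub_ne_zero.2 hne)
  have hDpos : 0 < D := by rw [← hD]; positivity
  set t : ℝ := N / D with ht
  have ht1 : 1 < t := by
    rw [ht, lt_div_iff₀ hDpos]
    have hsub : N - D = dotp s e - eN s ^ 2 := by
      rw [eN_sq, hNdef, hDdef]; simp only [dotp]; ring
    nlinarith
  have htne : t ≠ 0 := by positivity
  set p : ℝ × ℝ := e + t • (s - e) with hp
  have hp1 : p.1 = e.1 + t * (s.1 - e.1) := rfl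
  have hp2 : p.2 = e.2 + t * (s.2 - e.2) := rfl
  have hdp1 : D * p.1 = D * e.1 + N * (s.1 - e.1) := by
    rw [hp1, ht]; field_simp
  have hdp2 : D * p.2 = D * e.2 + N * (s.2 - e.2) := by
    rw [hp2, ht]; field_simp
  have hkey : (D * p.1) ^ 2 + (D * p.2) ^ 2 = cross e s ^ 2 * D := by
    rw [hdp1, hdp2, hDdef, hNdef]; simp only [cross]; ring
  have hcross2 : cross e s ^ 2 < r ^ 2 * D := by
    have h1 : |cross e s| ^ 2 < (r * eN (e - s)) ^ 2 := by
      have h0 : 0 ≤ |cross e s| := abs_nonneg _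
      have h0' : 0 < r * eN (e - s) := by positivity
      nlinarith
    rw [sq_abs] at h1
    calc cross e s ^ 2 < (r * eN (e - s)) ^ 2 := h1
    _ = r ^ 2 * D := by rw [mul_pow, hD]
  have hpK : p ∈ K := by
    apply hrB
    show eN p ≤ r
    have hsq : p.1 ^ 2 + p.2 ^ 2 ≤ r ^ 2 := by
      have e1 : D * (D * (p.1 ^ 2 + p.2 ^ 2)) = cross e s ^ 2 * D := by rw [← hkey]; ring
      have e2 : cross e s ^ 2 * D ≤ (r ^ 2 * D) * D := mul_le_mul_of_nonneg_right hcross2.le hDpos.le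
      have e3 : D * (D * (p.1 ^ 2 + p.2 ^ 2)) ≤ D * (D * r ^ 2) := by
        rw [e1]; linarith [e2]
      exact le_of_mul_le_mul_left (le_of_mul_le_mul_left e3 hDpos) hDpos
    rw [eN]
    calc Real.sqrt (p.1 ^ 2 + p.2 ^ 2) ≤ Real.sqrt (r ^ 2) := Real.sqrt_le_sqrt hsq
    _ = r := Real.sqrt_sq hr.le
  have hseg : s ∈ openSegment ℝ e p := by
    have h1t : 0 < 1/t := by positivity
    refine ⟨1 - 1/t, 1/t, ?_, h1t, by ring, ?_⟩
    · have : 1/t < 1 := by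
        rw [div_lt_one (by linarith)]; exact ht1
      linarith
    · ext
      · show (1 - 1/t) * e.1 + (1/t) * p.1 = s.1
        rw [hp1]; field_simp; ring
      · show (1 - 1/t) * e.2 + (1/t) * p.2 = s.2
        rw [hp2]; field_simp; ring
  have := hs.2 he hpK hseg
  exact hne this

end LemB
section Arith

lemma arithLem {r R δ κ A B n M q C c w P : ℝ}
    (hr : 0 < r) (hrR : r ≤ R) (hδ : 0 < δ) (hδsmall : δ ≤ 0.02)
    (hκ1 : κ ≤ 1) (hκ2 : 1 - δ ^ 2 / 2 ≤ κ)
    (hA : 0 < A) (hAR : A ≤ R) (hBR : B ≤ R)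
    (hn : 0 < n) (hMn : r * n ≤ M) (hMBn : M ≤ B * n)
    (hq : A * B * κ ≤ q)
    (hcabs : |c| ≤ B * n)
    (hCabs : |C| ≤ P)
    (hid : B ^ 2 * w = q * M + C * c)
    (hP : P = R ^ 2 * δ) (hPr : P ≤ 0.02 * r ^ 2)
    (hBA : (B - A) * r ≤ P) :
    r ^ 2 * M ≤ (r ^ 2 + 4 * P) * w := by
  have hR : 0 < R := lt_of_lt_of_le hr hrR
  have hP0 : 0 < P := by rw [hP]; positivity
  have hκ0 : 0 < κ := by
    have := mul_le_mul_of_nonneg_right hδsmall hδ.le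
    linarith
  have hM0 : 0 < M := lt_of_lt_of_le (by positivity) hMn
  have hB0 : 0 < B := by
    by_contra h
    push_neg at h
    have : B * n ≤ 0 := mul_nonpos_of_nonpos_of_nonneg h hn.le
    linarith
  have hB : r ≤ B := by
    have h1 : r * n ≤ B * n := le_trans hMn hMBn
    exact le_of_mul_le_mul_right h1 hn
  have hq0 : 0 ≤ q := le_trans (mul_pos (mul_pos hA hB0) hκ0).le hq
  -- step A : q*r lower bound
  have hqlb : (B * r - P) * (B * κ) ≤ q * r := by
    have h1 : B * r - P ≤ A * r := by linarith
    have h2 : (B * r - P) * (B * κ) ≤ (A * r) * (B * κ) :=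
      mul_le_mul_of_nonneg_right h1 (mul_pos hB0 hκ0).le
    have h3 : (A * B * κ) * r ≤ q * r := mul_le_mul_of_nonneg_right hq hr.le
    calc (B * r - P) * (B * κ) ≤ (A * r) * (B * κ) := h2
    _ = (A * B * κ) * r := by ring
    _ ≤ q * r := h3
  -- step B : from identity
  have hstep1 : q * M - P * (B * n) ≤ B ^ 2 * w := by
    have h1 : -(|C| * |c|) ≤ C * c := by
      have := neg_abs_le (C * c)
      rw [abs_mul] at this; linarith
    have h2 : |C| * |c| ≤ P * (B * n) :=
      mul_le_mul hCabs hcabs (abs_nonneg _) hP0.le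
    linarith
  -- step C : multiply by r and use r*n ≤ M
  have hstep2 : (B * r - P) * (B * κ) * M - P * (B * M) ≤ B ^ 2 * w * r := by
    have hnr : n * r ≤ M := by linarith [hMn]
    have h1 : P * B * (n * r) ≤ P * B * M :=
      mul_le_mul_of_nonneg_left hnr (mul_pos hP0 hB0).le
    have h3 : (q * M - P * (B * n)) * r ≤ B ^ 2 * w * r :=
      mul_le_mul_of_nonneg_right hstep1 hr.le
    have h4 : (B * r - P) * (B * κ) * M ≤ q * r * M :=
      mul_le_mul_of_nonneg_right hqlb hM0.le
    linarith [h1, h3, h4]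
  -- step D : lower bound (B*r - P)*κ
  have hBrP : 0 ≤ B * r - P := by
    have h1 : r * r ≤ B * r := mul_le_mul_of_nonneg_right hB hr.le
    linarith [h1, hPr, mul_pos hr hr]
  have hstep3 : (B * r - (2.01 : ℝ) * P) * M * B ≤ B ^ 2 * w * r := by
    have h1 : (B * r - P) * (1 - δ ^ 2 / 2) ≤ (B * r - P) * κ :=
      mul_le_mul_of_nonneg_left hκ2 hBrP
    have hPδ : 0 ≤ P * δ ^ 2 := mul_nonneg hP0.le (sq_nonneg δ)
    have h3 : 0 ≤ (R - B) * (r * δ ^ 2) :=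
      mul_nonneg (by linarith) (mul_nonneg hr.le (sq_nonneg δ))
    have hrδ : r * δ ≤ R * 0.02 := by
      linarith [mul_le_mul_of_nonneg_right hrR hδ.le, mul_le_mul_of_nonneg_left hδsmall hR.le]
    have h4 : (R * δ) * (r * δ) ≤ (R * δ) * (R * 0.02) :=
      mul_le_mul_of_nonneg_left hrδ (mul_nonneg hR.le hδ.le)
    -- so B*r*δ²/2 ≤ 0.01 * R^2 * δ = 0.01 P
    have h5 : B * r * (δ ^ 2 / 2) ≤ (0.01 : ℝ) * P := by
      rw [hP]; linarith [h3, h4]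
    have h6 : B * r - (2.01 : ℝ) * P ≤ (B * r - P) * κ - P := by linarith [h1, h5, hPδ]
    have h7 : (B * r - (2.01:ℝ) * P) * M ≤ ((B * r - P) * κ - P) * M :=
      mul_le_mul_of_nonneg_right h6 hM0.le
    have h8 : (B * r - (2.01:ℝ) * P) * M * B ≤ (((B * r - P) * κ - P) * M) * B :=
      mul_le_mul_of_nonneg_right h7 hB0.le
    calc (B * r - (2.01:ℝ) * P) * M * B ≤ (((B * r - P) * κ - P) * M) * B := h8
    _ = (B * r - P) * (B * κ) * M - P * (B * M) := by ring
    _ ≤ B ^ 2 * w * r := hstep2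
  -- step E : conclude
  have hBrP2 : 0 < B * r - (2.01 : ℝ) * P := by
    have h1 : r * r ≤ B * r := mul_le_mul_of_nonneg_right hB hr.le
    linarith [h1, hPr, mul_pos hr hr]
  have hw0 : 0 < w := by
    have h1 : 0 < (B * r - (2.01:ℝ) * P) * M * B := mul_pos (mul_pos hBrP2 hM0) hB0
    by_contra h
    push_neg at h
    have h2 : B ^ 2 * w ≤ 0 := mul_nonpos_of_nonneg_of_nonpos (sq_nonneg B) h
    have h3 : B ^ 2 * w * r ≤ 0 := mul_nonpos_of_nonpos_of_nonneg h2 hr.le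
    linarith
  have h3 : 0 ≤ 4 * (B * r) - (2.01:ℝ) * r ^ 2 - (8.04:ℝ) * P := by
    have h1 : 0 ≤ (B - r) * r := mul_nonneg (by linarith) hr.le
    linarith [h1, hPr]
  have h3' : 0 ≤ (M * B) * (P * (4 * (B * r) - (2.01:ℝ) * r ^ 2 - (8.04:ℝ) * P)) :=
    mul_nonneg (mul_nonneg hM0.le hB0.le) (mul_nonneg hP0.le h3)
  have h1 : (r ^ 2 + 4 * P) * ((B * r - (2.01:ℝ) * P) * M * B) ≤
      (r ^ 2 + 4 * P) * (B ^ 2 * w * r) :=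
    mul_le_mul_of_nonneg_left hstep3 (by positivity)
  have hkey : (B * B * r) * (r ^ 2 * M) ≤ (B * B * r) * ((r ^ 2 + 4 * P) * w) := by
    have h2 : (B * B * r) * (r ^ 2 * M) ≤ (r ^ 2 + 4 * P) * ((B * r - (2.01:ℝ) * P) * M * B) := by
      linarith [h3']
    calc (B * B * r) * (r ^ 2 * M) ≤ (r ^ 2 + 4 * P) * ((B * r - (2.01:ℝ) * P) * M * B) := h2
    _ ≤ (r ^ 2 + 4 * P) * (B ^ 2 * w * r) := h1
    _ = (B * B * r) * ((r ^ 2 + 4 * P) * w) := by ring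
  exact le_of_mul_le_mul_left hkey (mul_pos (mul_pos hB0 hB0) hr)

end Arith
section Key
variable {K : Set (ℝ × ℝ)} {r R δ : ℝ}

lemma dotp_comm (u v : ℝ × ℝ) : dotp u v = dotp v u := by simp only [dotp]; ring

lemma dotp_le_eN (u v : ℝ × ℝ) : dotp u v ≤ eN u * eN v :=
  (le_abs_self _).trans (abs_dotp_le u v)

lemma delta_small (hr : 0 < r) (hrR : r ≤ R) (hδ' : δ ≤ 0.02 * (r / R) ^ 2) : δ ≤ 0.02 := by
  have hR : 0 < R := lt_of_lt_of_le hr hrR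
  have h1 : r / R ≤ 1 := (div_le_one hR).2 hrR
  have h0 : 0 ≤ r / R := div_nonneg hr.le hR.le
  nlinarith

lemma keyLem (hr : 0 < r) (hrR : r ≤ R) (hrB : eBall r ⊆ K)
    (hδ : 0 < δ) (hδ' : δ ≤ 0.02 * (r / R) ^ 2)
    {s e ν : ℝ × ℝ} (hs : s ∈ K.extremePoints ℝ) (he : e ∈ K)
    (hne : e ≠ s) (hsR : eN s ≤ R) (heR : eN e ≤ R)
    (hq : eN s * eN e * Real.cos δ ≤ dotp s e)
    (hν : ν ≠ 0) (hM : r * eN ν ≤ dotp e ν) :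
    r ^ 2 * dotp e ν ≤ (r ^ 2 + 4 * (R ^ 2 * δ)) * dotp s ν := by
  have hR : 0 < R := lt_of_lt_of_le hr hrR
  have hδsmall : δ ≤ 0.02 := delta_small hr hrR hδ'
  have hA : 0 < eN s := eN_pos (extreme_ne_zero hr hrB hs)
  have hn : 0 < eN ν := eN_pos hν
  have hB0 : 0 < eN e := by
    have h1 : 0 < r * eN ν := mul_pos hr hn
    have h2 : dotp e ν ≤ eN e * eN ν := dotp_le_eN e ν
    by_contra h
    push_neg at h
    have h3 : eN e * eN ν ≤ 0 := mul_nonpos_of_nonpos_of_nonneg h hn.le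
    linarith
  have hcos1 : Real.cos δ ≤ 1 := Real.cos_le_one δ
  have hcos2 : 1 - δ ^ 2 / 2 ≤ Real.cos δ := Real.one_sub_sq_div_two_le_cos
  have hcos0 : 0 < Real.cos δ := by
    linarith [hcos2, mul_le_mul_of_nonneg_right hδsmall hδ.le, hδ]
  have hq0 : 0 ≤ dotp s e :=
    le_trans (mul_pos (mul_pos hA hB0) hcos0).le hq
  -- cross bound
  have hCabs : |cross e s| ≤ R ^ 2 * δ := by
    have hlag : cross e s ^ 2 + dotp e s ^ 2 = (eN e * eN s) ^ 2 := lagrange e s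
    rw [dotp_comm e s] at hlag
    have hqsq : (eN s * eN e * Real.cos δ) ^ 2 ≤ dotp s e ^ 2 := by
      have h0 : 0 ≤ eN s * eN e * Real.cos δ := (mul_pos (mul_pos hA hB0) hcos0).le
      exact pow_le_pow_left₀ h0 hq 2
    have h1mc : 1 - Real.cos δ ^ 2 ≤ δ ^ 2 := by
      have hc0 : 0 ≤ 1 + Real.cos δ := by linarith
      have hprod : (1 - Real.cos δ) * (1 + Real.cos δ) ≤ (δ ^ 2 / 2) * 2 :=
        mul_le_mul (by linarith) (by linarith) hc0 (by positivity)
      nlinarith [hprod]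
    have h2 : (eN s * eN e) ^ 2 * (1 - Real.cos δ ^ 2) ≤ (eN s * eN e) ^ 2 * δ ^ 2 :=
      mul_le_mul_of_nonneg_left h1mc (sq_nonneg _)
    have hCsq : cross e s ^ 2 ≤ (eN s * eN e * δ) ^ 2 := by linarith [hlag, hqsq, h2]
    have h3 : |cross e s| ≤ eN s * eN e * δ :=
      abs_le_of_sq_le_sq hCsq (by positivity)
    have h4 : eN s * eN e ≤ R ^ 2 := by
      linarith [mul_le_mul hsR heR (eN_nonneg e) hR.le]
    have h5 : eN s * eN e * δ ≤ R ^ 2 * δ := mul_le_mul_of_nonneg_right h4 hδ.le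
    linarith
  -- radial bound
  have hBA : (eN e - eN s) * r ≤ R ^ 2 * δ := by
    by_cases hcse : dotp s e ≤ eN s ^ 2
    · have h1 : eN e * Real.cos δ ≤ eN s := by
        have h2 : eN s * (eN e * Real.cos δ) ≤ eN s * eN s := by
          calc eN s * (eN e * Real.cos δ) = eN s * eN e * Real.cos δ := by ring
          _ ≤ dotp s e := hq
          _ ≤ eN s ^ 2 := hcse
          _ = eN s * eN s := sq (eN s) ▸ by ring
        exact le_of_mul_le_mul_left h2 hA
      have h2 : eN e - eN s ≤ eN e * (1 - Real.cos δ) := by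
        have := mul_le_mul_of_nonneg_left h1 (eN_nonneg e)
        nlinarith [this]
      have h3 : eN e * (1 - Real.cos δ) ≤ R * (δ ^ 2 / 2) :=
        mul_le_mul heR (by linarith) (by linarith) hR.le
      have hrδ : r * δ ≤ 2 * R := by
        have := mul_le_mul hrR hδsmall hδ.le hR.le
        linarith
      have h4 : (R * (δ ^ 2 / 2)) * r ≤ R ^ 2 * δ := by
        linarith [mul_le_mul_of_nonneg_left hrδ (mul_nonneg hR.le hδ.le)]
      have h5 : (eN e - eN s) * r ≤ (R * (δ ^ 2 / 2)) * r := by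
        apply mul_le_mul_of_nonneg_right _ hr.le
        linarith
      linarith
    · push_neg at hcse
      have hlb := lemB hr hrB hs he hne hcse
      have htri : eN e ≤ eN s + eN (e - s) := by
        have h := eN_add_le s (e - s)
        have heq : s + (e - s) = e := by ring
        rw [heq] at h
        exact h
      have h2 : r * eN (e - s) ≤ R ^ 2 * δ := le_trans hlb hCabs
      have h3 : (eN e - eN s) * r ≤ eN (e - s) * r :=
        mul_le_mul_of_nonneg_right (by linarith) hr.le
      linarith
  -- identity
  have hid : eN e ^ 2 * dotp s ν = dotp s e * dotp e ν + cross e s * cross e ν := by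
    rw [eN_sq]
    simp only [dotp, cross]; ring
  have hPr : R ^ 2 * δ ≤ 0.02 * r ^ 2 := by
    have h1 : R ^ 2 * δ ≤ R ^ 2 * (0.02 * (r / R) ^ 2) :=
      mul_le_mul_of_nonneg_left hδ' (sq_nonneg R)
    have h2 : R ^ 2 * (0.02 * (r / R) ^ 2) = 0.02 * r ^ 2 := by
      field_simp
    linarith
  exact arithLem hr hrR hδ hδsmall hcos1 hcos2 hA hsR heR hn hM (dotp_le_eN e ν)
    hq (abs_cross_le e ν) hCabs hid rfl hPr hBA
end Key
section Cover
variable {V : Finset (ℝ × ℝ)} {K : Set (ℝ × ℝ)} {r R δ : ℝ}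

lemma dotp_smul (t : ℝ) (u v : ℝ × ℝ) : dotp (t • u) v = t * dotp u v := by
  simp only [dotp, Prod.smul_fst, Prod.smul_snd, smul_eq_mul]; ring

lemma dotp_self (v : ℝ × ℝ) : dotp v v = eN v ^ 2 := by
  rw [eN_sq]; simp only [dotp]; ring

lemma coverLem (hKV : K = convexHull ℝ ↑V)
    (hr : 0 < r) (hrR : r ≤ R) (hrB : eBall r ⊆ K) (hRB : K ⊆ eBall R)
    (hδ : 0 < δ) (hδ' : δ ≤ 0.02 * (r / R) ^ 2)
    {S : Finset (ℝ × ℝ)} (hSsub : ∀ s ∈ S, s ∈ K.extremePoints ℝ) (hSne : S.Nonempty)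
    (hSmax : ∀ e ∈ K.extremePoints ℝ, e ∉ S → ∃ s ∈ S, eN s * eN e * Real.cos δ < dotp s e) :
    K ⊆ (1 + 4 * R ^ 2 / r ^ 2 * δ) • (convexHull ℝ (S : Set (ℝ × ℝ))) := by
  have hR : 0 < R := lt_of_lt_of_le hr hrR
  set lam : ℝ := 1 + 4 * R ^ 2 / r ^ 2 * δ with hlam
  have hlam1 : 1 < lam := by
    rw [hlam]
    have : 0 < 4 * R ^ 2 / r ^ 2 * δ := by positivity
    linarith
  intro x hx
  by_contra hxQ
  have hQconvex : Convex ℝ (lam • (convexHull ℝ (S : Set (ℝ × ℝ)))) :=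
    (convex_convexHull ℝ _).smul lam
  have hQcomp : IsCompact (lam • (convexHull ℝ (S : Set (ℝ × ℝ)))) := by
    have h1 : IsCompact (convexHull ℝ (S : Set (ℝ × ℝ))) :=
      S.finite_toSet.isCompact_convexHull ℝ
    have h2 := h1.image (continuous_const_smul lam)
    rwa [Set.image_smul] at h2
  obtain ⟨f, u, hfa, hfx⟩ :=
    geometric_hahn_banach_closed_point hQconvex hQcomp.isClosed hxQ
  set ν : ℝ × ℝ := (f (1, 0), f (0, 1)) with hν'
  have hfp : ∀ p : ℝ × ℝ, f p = dotp p ν := by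
    intro p
    have hp : p = p.1 • ((1:ℝ), (0:ℝ)) + p.2 • ((0:ℝ), (1:ℝ)) := by
      ext
      · simp
      · simp
    calc f p = f (p.1 • ((1:ℝ), (0:ℝ)) + p.2 • ((0:ℝ), (1:ℝ))) := by rw [← hp]
    _ = p.1 * f (1, 0) + p.2 * f (0, 1) := by
        rw [map_add, map_smul, map_smul]; simp
    _ = dotp p ν := by rw [hν']; simp only [dotp]
  obtain ⟨s₀, hs₀⟩ := hSne
  have hsmem : ∀ s ∈ S, lam • s ∈ lam • (convexHull ℝ (S : Set (ℝ × ℝ))) := by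
    intro s hsS
    exact Set.smul_mem_smul_set (subset_convexHull ℝ _ (by exact_mod_cast hsS))
  have hν : ν ≠ 0 := by
    intro h0
    have h1 : ∀ p : ℝ × ℝ, f p = 0 := by
      intro p; rw [hfp p, h0]; simp [dotp]
    have h2 := hfa _ (hsmem s₀ hs₀)
    rw [h1] at h2
    rw [h1] at hfx
    linarith
  have hn : 0 < eN ν := eN_pos hν
  -- maximum of f on K attained at an extreme point
  have hKcomp : IsCompact K := by rw [hKV]; exact V.finite_toSet.isCompact_convexHull ℝ
  have h0K : (0 : ℝ × ℝ) ∈ K := zero_mem hr hrB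
  obtain ⟨e₀, he₀K, he₀max⟩ := hKcomp.exists_isMaxOn ⟨0, h0K⟩ f.continuous.continuousOn
  have hFexp : IsExposed ℝ K (f.toExposed K) := ContinuousLinearMap.toExposed.isExposed
  have hFne : (f.toExposed K).Nonempty := ⟨e₀, he₀K, fun z hz => he₀max hz⟩
  obtain ⟨e, heF⟩ := (hFexp.isCompact hKcomp).extremePoints_nonempty hFne
  have he_ext : e ∈ K.extremePoints ℝ :=
    hFexp.isExtreme.extremePoints_subset_extremePoints heF
  have heFmem : e ∈ f.toExposed K := extremePoints_subset heF
  obtain ⟨heK, hemax⟩ := heFmem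
  -- f e ≥ r * eN ν
  have hMrn : r * eN ν ≤ f e := by
    have hp : ((r / eN ν) • ν) ∈ K := by
      apply hrB
      show eN ((r / eN ν) • ν) ≤ r
      rw [eN_smul, abs_of_pos (by positivity)]
      rw [div_mul_cancel₀ _ hn.ne']
    have h1 := hemax _ hp
    rw [hfp] at h1
    rw [dotp_smul, dotp_self] at h1
    have h2 : r / eN ν * eN ν ^ 2 = r * eN ν := by
      field_simp
    rw [h2] at h1
    exact h1
  have hfe_pos : 0 < f e := lt_of_lt_of_le (by positivity) hMrn
  have hfxe : u < f e := lt_of_lt_of_le hfx (hemax x hx)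
  by_cases heS : e ∈ S
  · have h2 := hfa _ (hsmem e heS)
    rw [map_smul, smul_eq_mul] at h2
    nlinarith
  · obtain ⟨s, hsS, hclose⟩ := hSmax e he_ext heS
    have hs_ext := hSsub s hsS
    have hne : e ≠ s := fun h => heS (h ▸ hsS)
    have hsR : eN s ≤ R := hRB hs_ext.1
    have heR : eN e ≤ R := hRB heK
    have hMdotp : r * eN ν ≤ dotp e ν := by rw [← hfp]; exact hMrn
    have hkey := keyLem hr hrR hrB hδ hδ' hs_ext heK hne hsR heR hclose.le hν hMdotp
    have h2 := hfa _ (hsmem s hsS)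
    rw [map_smul, smul_eq_mul, hfp] at h2
    rw [← hfp e] at hkey
    -- (lam) * dotp s ν < u < f e  and  r^2 * f e ≤ (r^2+4R^2δ) * dotp s ν
    have h3 : r ^ 2 * (lam * dotp s ν) < r ^ 2 * f e :=
      mul_lt_mul_of_pos_left (lt_trans h2 hfxe) (by positivity)
    have h5 : r ^ 2 * lam = r ^ 2 + 4 * (R ^ 2 * δ) := by
      rw [hlam]; field_simp
    have h4 : r ^ 2 * (lam * dotp s ν) = (r ^ 2 + 4 * (R ^ 2 * δ)) * dotp s ν := by
      rw [← h5]; ring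
    linarith
end Cover
section Order
variable {K : Set (ℝ × ℝ)} {r : ℝ}

lemma eN_unit (φ : ℝ) : eN (Real.cos φ, Real.sin φ) = 1 := by
  show Real.sqrt (Real.cos φ ^ 2 + Real.sin φ ^ 2) = 1
  rw [add_comm, Real.sin_sq_add_cos_sq, Real.sqrt_one]

lemma dotp_unit (s : ℝ × ℝ) (φ : ℝ) :
    dotp s (Real.cos φ, Real.sin φ) = eN s * Real.cos (th s - φ) := by
  obtain ⟨h1, h2⟩ := th_cos_sin s
  rw [Real.cos_sub]
  show s.1 * Real.cos φ + s.2 * Real.sin φ = _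
  rw [h1, h2]; ring

lemma th_inj (hr : 0 < r) (hrB : eBall r ⊆ K)
    {u w : ℝ × ℝ} (hu : u ∈ K.extremePoints ℝ) (hw : w ∈ K.extremePoints ℝ)
    (hne : u ≠ w) : th u ≠ th w := by
  intro harg
  have h0K : (0 : ℝ × ℝ) ∈ K := zero_mem hr hrB
  have hu0 : u ≠ 0 := extreme_ne_zero hr hrB hu
  have hw0 : w ≠ 0 := extreme_ne_zero hr hrB hw
  have hzu : (⟨u.1, u.2⟩ : ℂ) ≠ 0 := by
    simp only [ne_eq, Complex.ext_iff, Complex.zero_re, Complex.zero_im, not_and]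
    intro h1 h2
    exact hu0 (Prod.ext h1 h2)
  have hzw : (⟨w.1, w.2⟩ : ℂ) ≠ 0 := by
    simp only [ne_eq, Complex.ext_iff, Complex.zero_re, Complex.zero_im, not_and]
    intro h1 h2
    exact hw0 (Prod.ext h1 h2)
  have hk := (Complex.arg_eq_arg_iff hzu hzw).1 harg
  set k : ℝ := ‖(⟨w.1, w.2⟩ : ℂ)‖ / ‖(⟨u.1, u.2⟩ : ℂ)‖ with hkdef
  have hkpos : 0 < k := by
    apply div_pos <;> exact (norm_pos_iff.mpr (by assumption))
  have hcast : (((‖(⟨w.1, w.2⟩ : ℂ)‖ : ℝ) : ℂ) / ((‖(⟨u.1, u.2⟩ : ℂ)‖ : ℝ) : ℂ)) = ((k : ℝ) : ℂ) := by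
    rw [hkdef]; push_cast; ring
  rw [hcast] at hk
  have hk1 : w.1 = k * u.1 := by
    have := congrArg Complex.re hk
    simpa [Complex.mul_re] using this.symm
  have hk2 : w.2 = k * u.2 := by
    have := congrArg Complex.im hk
    simpa [Complex.mul_im] using this.symm
  rcases lt_trichotomy k 1 with hlt | heq | hgt
  · -- w = k • u ∈ openSegment 0 u
    have hseg : w ∈ openSegment ℝ (0 : ℝ × ℝ) u := by
      refine ⟨1 - k, k, by linarith, hkpos, by ring, ?_⟩
      ext
      · show (1 - k) * 0 + k * u.1 = w.1
        rw [hk1]; ring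
      · show (1 - k) * 0 + k * u.2 = w.2
        rw [hk2]; ring
    have := hw.2 h0K hu.1 hseg
    exact hw0 this.symm
  · apply hne
    ext
    · rw [hk1, heq, one_mul]
    · rw [hk2, heq, one_mul]
  · have hseg : u ∈ openSegment ℝ (0 : ℝ × ℝ) w := by
      have hik : 0 < 1 / k := by positivity
      refine ⟨1 - 1/k, 1/k, ?_, hik, by ring, ?_⟩
      · have : 1/k < 1 := by rw [div_lt_one (by linarith)]; exact hgt
        linarith
      ext
      · show (1 - 1/k) * 0 + (1/k) * w.1 = u.1
        rw [hk1]; field_simp; ring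
      · show (1 - 1/k) * 0 + (1/k) * w.2 = u.2
        rw [hk2]; field_simp; ring
    have := hu.2 h0K hw.1 hseg
    exact hu0 this.symm

end Order
set_option maxHeartbeats 1000000 in
theorem stmt17 (V : Finset (ℝ × ℝ)) (K : Set (ℝ × ℝ)) (hKV : K = convexHull ℝ ↑V)
    (r R : ℝ) (hr : 0 < r) (hrR : r ≤ R) (hrB : eBall r ⊆ K) (hRB : K ⊆ eBall R)
    (δ : ℝ) (hδ : 0 < δ) (hδ' : δ ≤ 0.02 * (r / R) ^ 2) :
    ∃ m : ℕ, ∃ v : ℕ → ℝ × ℝ,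
      (∀ i < m, v i ∈ K.extremePoints ℝ) ∧
      (∀ i < m, 0 < cross (v i) (v ((i + 1) % m))) ∧
      (∀ i < m, δ ≤ ang (v i) (v ((i + 1) % m))) ∧
      (convexHull ℝ {p | ∃ i < m, p = v i} ⊆ K) ∧
      (K ⊆ (1 + 4 * R ^ 2 / r ^ 2 * δ) • convexHull ℝ {p | ∃ i < m, p = v i}) := by
  classical
  have hR : 0 < R := lt_of_lt_of_le hr hrR
  have hδsmall : δ ≤ 0.02 := delta_small hr hrR hδ'
  have hδπ : δ ≤ π := by linarith [Real.pi_gt_three]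
  have hconvK : Convex ℝ K := hKV ▸ convex_convexHull ℝ _
  have hKcomp : IsCompact K := by rw [hKV]; exact V.finite_toSet.isCompact_convexHull ℝ
  have h0K : (0 : ℝ × ℝ) ∈ K := zero_mem hr hrB
  have hextV : K.extremePoints ℝ ⊆ ↑V := by
    rw [hKV]; exact extremePoints_convexHull_subset
  set E : Finset (ℝ × ℝ) := V.filter (fun p => p ∈ K.extremePoints ℝ) with hE
  have hEmem : ∀ p : ℝ × ℝ, p ∈ E ↔ p ∈ K.extremePoints ℝ := by
    intro p
    rw [hE, Finset.mem_filter]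
    exact ⟨fun h => h.2, fun h => ⟨hextV h, h⟩⟩
  have hEne : E.Nonempty := by
    obtain ⟨p, hp⟩ := hKcomp.extremePoints_nonempty ⟨0, h0K⟩
    exact ⟨p, (hEmem p).2 hp⟩
  -- maximal separated subset S
  set sep : Finset (ℝ × ℝ) → Prop := fun F => ∀ a ∈ F, ∀ b ∈ F, a ≠ b →
      dotp a b ≤ eN a * eN b * Real.cos δ with hsepdef
  obtain ⟨S, hSpow, hSmaxcard⟩ :=
    Finset.exists_max_image E.powerset (fun F => if sep F then F.card else 0)
      ⟨∅, Finset.empty_mem_powerset E⟩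
  have hSE : S ⊆ E := Finset.mem_powerset.1 hSpow
  obtain ⟨p₀, hp₀⟩ := hEne
  have hsingle : sep {p₀} := by
    intro a ha b hb hab
    rw [Finset.mem_singleton] at ha hb
    exact absurd (ha.trans hb.symm) hab
  have hone : 1 ≤ if sep S then S.card else 0 := by
    have h2 := hSmaxcard {p₀} (Finset.mem_powerset.2 (Finset.singleton_subset_iff.2 hp₀))
    rw [if_pos hsingle, Finset.card_singleton] at h2
    exact h2
  have hsepS : sep S := by
    by_contra h
    rw [if_neg h] at hone
    omega
  have hScard1 : 1 ≤ S.card := by rwa [if_pos hsepS] at hone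
  have hSsep : ∀ a ∈ S, ∀ b ∈ S, a ≠ b → dotp a b ≤ eN a * eN b * Real.cos δ := hsepS
  have hSsub : ∀ s ∈ S, s ∈ K.extremePoints ℝ := fun s hs => (hEmem s).1 (hSE hs)
  have hSne : S.Nonempty := Finset.card_pos.1 hScard1
  have hSmax : ∀ e ∈ K.extremePoints ℝ, e ∉ S →
      ∃ s ∈ S, eN s * eN e * Real.cos δ < dotp s e := by
    intro e he heS
    by_contra hcon
    push_neg at hcon
    have hsep1 : sep (insert e S) := by
      intro a ha b hb hab
      rw [Finset.mem_insert] at ha hb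
      rcases ha with rfl | haS
      · rcases hb with rfl | hbS
        · exact absurd rfl hab
        · have := hcon b hbS
          rw [dotp_comm b a] at this
          calc dotp a b ≤ eN b * eN a * Real.cos δ := this
          _ = eN a * eN b * Real.cos δ := by ring
      · rcases hb with rfl | hbS
        · exact hcon a haS
        · exact hSsep a haS b hbS hab
    have h2 := hSmaxcard (insert e S)
      (Finset.mem_powerset.2 (Finset.insert_subset ((hEmem e).2 he) hSE))
    rw [if_pos hsep1, if_pos hsepS, Finset.card_insert_of_notMem heS] at h2
    omega
  have hcover := coverLem hKV hr hrR hrB hRB hδ hδ' hSsub hSne hSmax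
  -- no closed halfplane through 0 contains S
  have hnohalf : ∀ ν : ℝ × ℝ, eN ν = 1 → (∀ s ∈ S, 0 ≤ dotp s ν) → False := by
    intro ν hν1 hpos
    have hlin : IsLinearMap ℝ (fun p : ℝ × ℝ => dotp p ν) := by
      constructor
      · intro a b; simp only [dotp, Prod.fst_add, Prod.snd_add]; ring
      · intro c a; simp only [dotp, Prod.smul_fst, Prod.smul_snd, smul_eq_mul]; ring
    have hQhalf : convexHull ℝ (S : Set (ℝ × ℝ)) ⊆ {p : ℝ × ℝ | 0 ≤ dotp p ν} :=
      convexHull_min (fun s hs => hpos s (by exact_mod_cast hs)) (convex_halfSpace_ge hlin 0)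
    have hqK : ((-r) • ν) ∈ K := by
      apply hrB
      show eN ((-r) • ν) ≤ r
      rw [eN_smul, hν1, abs_neg, abs_of_pos hr, mul_one]
    obtain ⟨y, hy, hyq⟩ := Set.mem_smul_set.1 (hcover hqK)
    have h1 : 0 ≤ dotp y ν := hQhalf hy
    have h2 : dotp ((-r) • ν) ν = -r := by
      rw [dotp_smul, dotp_self, hν1]; ring
    rw [← hyq, dotp_smul] at h2
    have hlam0 : (0:ℝ) < 1 + 4 * R ^ 2 / r ^ 2 * δ := by positivity
    nlinarith [mul_nonneg hlam0.le h1]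
  -- order S by angle
  set m := S.card with hm
  have hminj : Set.InjOn th (S : Set (ℝ × ℝ)) := by
    intro a ha b hb hab
    by_contra hne
    exact th_inj hr hrB (hSsub a (by exact_mod_cast ha)) (hSsub b (by exact_mod_cast hb))
      hne hab
  have hcard : (S.image th).card = m := Finset.card_image_of_injOn hminj
  set iso := (S.image th).orderIsoOfFin hcard with hiso
  set α : Fin m → ℝ := fun i => (iso i : ℝ) with hα
  have hmono : StrictMono α := fun i j hij => Subtype.coe_lt_coe.2 (iso.strictMono hij)
  have hsel' : ∀ i : Fin m, ∃ s ∈ S, th s = α i := by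
    intro i
    have h2 : (α i) ∈ S.image th := by rw [hα]; exact (iso i).2
    obtain ⟨s, hsS, hth⟩ := Finset.mem_image.1 h2
    exact ⟨s, hsS, hth⟩
  choose sel hselS hselθ using hsel'
  set v : ℕ → ℝ × ℝ := fun i => if h : i < m then sel ⟨i, h⟩ else (1, 0) with hv
  have hvi : ∀ i (h : i < m), v i = sel ⟨i, h⟩ := fun i h => dif_pos h
  have hsurj : ∀ s ∈ S, ∃ i : Fin m, sel i = s := by
    intro s hsS
    have hmem : th s ∈ S.image th := Finset.mem_image_of_mem th hsS
    obtain ⟨i, hi⟩ := iso.surjective ⟨th s, hmem⟩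
    refine ⟨i, hminj (by exact_mod_cast hselS i) (by exact_mod_cast hsS) ?_⟩
    rw [hselθ i, hα]
    exact congrArg Subtype.val hi
  have hsetEq : {p : ℝ × ℝ | ∃ i < m, p = v i} = (S : Set (ℝ × ℝ)) := by
    ext p
    constructor
    · rintro ⟨i, him, rfl⟩
      rw [hvi i him]
      exact_mod_cast hselS ⟨i, him⟩
    · intro hp
      obtain ⟨i, hi⟩ := hsurj p (by exact_mod_cast hp)
      exact ⟨i.val, i.2, by rw [hvi i.val i.2, Fin.eta, hi]⟩
  have hαlow : ∀ i : Fin m, -π < α i := fun i => by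
    rw [← hselθ i]; exact (th_mem _).1
  have hαhigh : ∀ i : Fin m, α i ≤ π := fun i => by
    rw [← hselθ i]; exact (th_mem _).2
  have hm0 : 0 < m := Finset.card_pos.2 hSne
  -- m ≥ 2
  have hm2 : 2 ≤ m := by
    by_contra hcon
    push_neg at hcon
    apply hnohalf (Real.cos (α ⟨0, hm0⟩), Real.sin (α ⟨0, hm0⟩)) (eN_unit _)
    intro s hsS
    obtain ⟨i, hi⟩ := hsurj s hsS
    have hieq : i = ⟨0, hm0⟩ := Fin.ext (by omega)
    rw [← hi, dotp_unit, hselθ i, hieq, sub_self, Real.cos_zero, mul_one]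
    exact eN_nonneg _
  -- all consecutive gaps < π
  have hgap : ∀ (a b : Fin m), a.val + 1 = b.val → α b - α a < π := by
    intro a b hab
    by_contra hcon
    push_neg at hcon
    set mid := (α a + α b) / 2 with hmid
    apply hnohalf (Real.cos (mid - π), Real.sin (mid - π)) (eN_unit _)
    intro s hsS
    obtain ⟨k, hk⟩ := hsurj s hsS
    rw [← hk, dotp_unit, hselθ k]
    have hcosval : Real.cos (α k - (mid - π)) = - Real.cos (α k - mid) := by
      rw [show α k - (mid - π) = (α k - mid) + π by ring, Real.cos_add_pi]
    rw [hcosval]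
    have hmid1 : mid ≤ π / 2 := by
      have := hαhigh b; rw [hmid]; linarith
    have hmid2 : -(π / 2) ≤ mid := by
      have := hαlow a; rw [hmid]; linarith
    have hcneg : Real.cos (α k - mid) ≤ 0 := by
      have hkab : k.val ≤ a.val ∨ b.val ≤ k.val := by omega
      rcases hkab with hk1 | hk2
      · have hαk : α k ≤ α a := by
          rcases eq_or_lt_of_le hk1 with heq | hlt
          · rw [Fin.ext heq]
          · exact (hmono (show k < a from hlt)).le
        have h1 : π / 2 ≤ mid - α k := by rw [hmid]; linarith
        have h2 : mid - α k ≤ π + π / 2 := by linarith [hαlow k]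
        have h3 := Real.cos_nonpos_of_pi_div_two_le_of_le h1 h2
        rwa [show mid - α k = -(α k - mid) by ring, Real.cos_neg] at h3
      · have hαk : α b ≤ α k := by
          rcases eq_or_lt_of_le hk2 with heq | hlt
          · rw [Fin.ext heq.symm]
          · exact (hmono (show b < k from hlt)).le
        have h1 : π / 2 ≤ α k - mid := by rw [hmid]; linarith
        have h2 : α k - mid ≤ π + π / 2 := by linarith [hαhigh k]
        exact Real.cos_nonpos_of_pi_div_two_le_of_le h1 h2
    nlinarith [eN_nonneg (sel k), hcneg]
  -- wrap gap < π
  have hwrap : α ⟨0, hm0⟩ + 2 * π - α ⟨m - 1, by omega⟩ < π := by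
    by_contra hcon
    push_neg at hcon
    set i0 : Fin m := ⟨0, hm0⟩
    set iL : Fin m := ⟨m - 1, by omega⟩
    set mid := (α i0 + α iL) / 2 with hmid
    apply hnohalf (Real.cos mid, Real.sin mid) (eN_unit _)
    intro s hsS
    obtain ⟨k, hk⟩ := hsurj s hsS
    rw [← hk, dotp_unit, hselθ k]
    apply mul_nonneg (eN_nonneg _)
    apply Real.cos_nonneg_of_mem_Icc
    have h1 : α i0 ≤ α k := by
      rcases eq_or_lt_of_le (show (0:ℕ) ≤ k.val from Nat.zero_le _) with heq | hlt
      · rw [show i0 = k from Fin.ext heq]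
      · exact (hmono (show i0 < k from hlt)).le
    have h2 : α k ≤ α iL := by
      rcases eq_or_lt_of_le (show k.val ≤ m - 1 by omega) with heq | hlt
      · rw [show k = iL from Fin.ext heq]
      · exact (hmono (show k < iL from hlt)).le
    constructor
    · rw [hmid]; linarith [Real.pi_pos]
    · rw [hmid]; linarith [Real.pi_pos]
  -- assemble
  refine ⟨m, v, ?_, ?_, ?_, ?_, ?_⟩
  · intro i him
    rw [hvi i him]
    exact hSsub _ (hselS _)
  · intro i him
    have hvne : ∀ j (hj : j < m), sel ⟨j, hj⟩ ≠ 0 :=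
      fun j hj => extreme_ne_zero hr hrB (hSsub _ (hselS _))
    by_cases hio : i + 1 < m
    · rw [Nat.mod_eq_of_lt hio, hvi i him, hvi (i+1) hio, cross_eq, hselθ, hselθ]
      have hpos : 0 < α ⟨i+1, hio⟩ - α ⟨i, him⟩ :=
        sub_pos.2 (hmono (Fin.mk_lt_mk.2 (by omega)))
      have hlt := hgap ⟨i, him⟩ ⟨i+1, hio⟩ rfl
      exact mul_pos (mul_pos (eN_pos (hvne i him)) (eN_pos (hvne (i+1) hio)))
        (Real.sin_pos_of_pos_of_lt_pi hpos hlt)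
    · have hieq : i + 1 = m := by omega
      have hmod : (i + 1) % m = 0 := by rw [hieq]; exact Nat.mod_self m
      rw [hmod, hvi i him, hvi 0 hm0, cross_eq, hselθ, hselθ]
      have hfin : (⟨i, him⟩ : Fin m) = ⟨m - 1, by omega⟩ := Fin.mk_eq_mk.2 (by omega)
      rw [hfin]
      have hgpos : 0 < α ⟨0, hm0⟩ + 2 * π - α ⟨m - 1, by omega⟩ := by
        have := hαhigh (⟨m - 1, by omega⟩ : Fin m)
        have := hαlow (⟨0, hm0⟩ : Fin m)
        linarith
      have hs2π : α ⟨0, hm0⟩ - α ⟨m - 1, by omega⟩ =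
          (α ⟨0, hm0⟩ + 2 * π - α ⟨m - 1, by omega⟩) - 2 * π := by ring
      rw [hs2π, Real.sin_sub_two_pi]
      exact mul_pos (mul_pos (eN_pos (hvne (m - 1) (by omega))) (eN_pos (hvne 0 hm0)))
        (Real.sin_pos_of_pos_of_lt_pi hgpos hwrap)
  · intro i him
    have hjm : (i + 1) % m < m := Nat.mod_lt _ hm0
    have hvine : v i ≠ 0 := by
      rw [hvi i him]; exact extreme_ne_zero hr hrB (hSsub _ (hselS _))
    have hvjne : v ((i+1) % m) ≠ 0 := by
      rw [hvi _ hjm]; exact extreme_ne_zero hr hrB (hSsub _ (hselS _))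
    have hne : v i ≠ v ((i + 1) % m) := by
      rw [hvi i him, hvi _ hjm]
      intro heq
      have hth := congrArg th heq
      rw [hselθ, hselθ] at hth
      have hfin : (⟨i, him⟩ : Fin m) = ⟨(i+1) % m, hjm⟩ := hmono.injective hth
      have hval : i = (i + 1) % m := congrArg Fin.val hfin
      by_cases hio : i + 1 < m
      · rw [Nat.mod_eq_of_lt hio] at hval; omega
      · have hieq : i + 1 = m := by omega
        rw [hieq, Nat.mod_self] at hval
        omega
    have hsep := hSsep (v i) (by rw [hvi i him]; exact hselS _)
      (v ((i+1) % m)) (by rw [hvi _ hjm]; exact hselS _) hne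
    have hAB : 0 < eN (v i) * eN (v ((i+1) % m)) :=
      mul_pos (eN_pos hvine) (eN_pos hvjne)
    show δ ≤ Real.arccos (dotp (v i) (v ((i+1) % m)) / (eN (v i) * eN (v ((i+1) % m))))
    set qq := dotp (v i) (v ((i+1) % m)) / (eN (v i) * eN (v ((i+1) % m))) with hqq
    have hq1 : qq ≤ Real.cos δ := by
      rw [hqq, div_le_iff₀ hAB]
      linarith [hsep]
    have hqm1 : -1 ≤ qq := by
      rw [hqq, le_div_iff₀ hAB]
      have h1 := abs_dotp_le (v i) (v ((i+1) % m))
      have h2 := neg_abs_le (dotp (v i) (v ((i+1) % m)))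
      linarith
    have hδeq : Real.arccos (Real.cos δ) = δ := Real.arccos_cos hδ.le hδπ
    rcases lt_or_eq_of_le hq1 with hlt | heqq
    · have h3 := Real.strictAntiOn_arccos
        ⟨hqm1, le_trans hq1 (Real.cos_le_one δ)⟩
        ⟨Real.neg_one_le_cos δ, Real.cos_le_one δ⟩ hlt
      rw [hδeq] at h3
      linarith
    · rw [heqq, hδeq]
  · rw [hsetEq]
    exact convexHull_min (fun s hs => (hSsub s (by exact_mod_cast hs)).1) hconvK
  · rw [hsetEq]
    exact hcover
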